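/- Let F be a map on a compact space, V an open set, and m ≥ 1 with F^m(V) ∩ V ≠ ∅. Set L̂ = ⋃_{n≥0} F^n(V), where V is connected and F maps connected sets to connected sets. Then L̂ has finitely many connected components (at most m), and if L is the component containing V, there exists ℓ with 1 ≤ ℓ ≤ m such that F^ℓ(L) ⊆ L. -/

import Mathlib

open Set Filter Topology

/-- If `V` is a nonempty connected set, `F` preserves connectedness, and
`F^m(V) ∩ V ≠ ∅` for some `m ≥ 1`, then `L̂ = ⋃ₙ Fⁿ(V)` has at most `m`
connected components, and the component `L` of `L̂` containing `V` satisfies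
`F^ℓ(L) ⊆ L` for some `1 ≤ ℓ ≤ m`. -/
theorem finitely_many_components_and_recurrence {α : Type*}
    [TopologicalSpace α] [CompactSpace α]
    (F : α → α) (V : Set α) (hV : V.Nonempty) (hVconn : IsPreconnected V)
    (hFconn : ∀ S : Set α, IsPreconnected S → IsPreconnected (F '' S))
    (m : ℕ) (hm : 1 ≤ m) (hrec : (F^[m] '' V ∩ V).Nonempty) :
    let Lhat : Set α := ⋃ n : ℕ, F^[n] '' V
    ({C : Set α | ∃ p ∈ Lhat, C = connectedComponentIn Lhat p}.Finite ∧
      {C : Set α | ∃ p ∈ Lhat, C = connectedComponentIn Lhat p}.ncard ≤ m) ∧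
    ∀ v ∈ V, ∃ ℓ : ℕ, 1 ≤ ℓ ∧ ℓ ≤ m ∧
      F^[ℓ] '' connectedComponentIn Lhat v ⊆ connectedComponentIn Lhat v := by
  intro Lhat
  obtain ⟨v0, hv0⟩ := hV
  -- iterates preserve preconnectedness
  have hiter : ∀ (n : ℕ) (S : Set α), IsPreconnected S → IsPreconnected (F^[n] '' S) := by
    intro n
    induction n with
    | zero => intro S hS; simpa using hS
    | succ k ih =>
      intro S hS
      rw [Function.iterate_succ', Set.image_comp]
      exact hFconn _ (ih S hS)
  -- the "residue class" unions
  set U : ℕ → Set α := fun r => ⋃ j : ℕ, F^[j * m + r] '' V with hUdef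
  have hUsub : ∀ r, U r ⊆ Lhat := fun r =>
    Set.iUnion_subset fun j => Set.subset_iUnion (fun n : ℕ => F^[n] '' V) (j * m + r)
  have hUmem : ∀ r, F^[r] v0 ∈ U r := fun r =>
    Set.mem_iUnion.2 ⟨0, by simpa using Set.mem_image_of_mem _ hv0⟩
  have hUconn : ∀ r, IsPreconnected (U r) := by
    intro r
    apply IsPreconnected.iUnion_of_chain (fun j => hiter (j * m + r) V hVconn)
    intro j
    obtain ⟨x, ⟨y, hy, rfl⟩, hx2⟩ := hrec
    refine ⟨F^[j * m + r] (F^[m] y), Set.mem_image_of_mem _ hx2, ⟨y, hy, ?_⟩⟩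
    rw [← Function.iterate_add_apply]
    congr 1
    rw [Order.succ_eq_add_one]
    ring
  -- every point of Lhat lies in some U r with r < m
  have hcover : ∀ p ∈ Lhat, ∃ r < m, p ∈ U r := by
    intro p hp
    obtain ⟨n, hn⟩ := Set.mem_iUnion.1 hp
    refine ⟨n % m, Nat.mod_lt _ hm, Set.mem_iUnion.2 ⟨n / m, ?_⟩⟩
    rwa [Nat.div_add_mod']
  -- components of points in U r coincide
  have hcomp : ∀ r, ∀ p ∈ U r,
      connectedComponentIn Lhat p = connectedComponentIn Lhat (F^[r] v0) := by
    intro r p hp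
    have hsub := (hUconn r).subset_connectedComponentIn hp (hUsub r)
    exact connectedComponentIn_eq (hsub (hUmem r))
  -- finiteness
  have hsubset : {C : Set α | ∃ p ∈ Lhat, C = connectedComponentIn Lhat p} ⊆
      (fun r : ℕ => connectedComponentIn Lhat (F^[r] v0)) '' ↑(Finset.range m) := by
    rintro C ⟨p, hp, rfl⟩
    obtain ⟨r, hr, hpr⟩ := hcover p hp
    exact ⟨r, by simpa using hr, (hcomp r p hpr).symm⟩
  have hfin : ((fun r : ℕ => connectedComponentIn Lhat (F^[r] v0)) ''
      ↑(Finset.range m)).Finite := (Finset.range m).finite_toSet.image _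
  refine ⟨⟨hfin.subset hsubset, ?_⟩, ?_⟩
  · calc {C : Set α | ∃ p ∈ Lhat, C = connectedComponentIn Lhat p}.ncard
        ≤ ((fun r : ℕ => connectedComponentIn Lhat (F^[r] v0)) ''
            ↑(Finset.range m)).ncard := Set.ncard_le_ncard hsubset hfin
      _ ≤ (↑(Finset.range m) : Set ℕ).ncard := Set.ncard_image_le (Finset.range m).finite_toSet
      _ = m := by rw [Set.ncard_coe_finset, Finset.card_range]
  -- recurrence with ℓ = m
  · intro v hv
    refine ⟨m, hm, le_refl m, ?_⟩
    set L := connectedComponentIn Lhat v with hL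
    have hVLhat : V ⊆ Lhat := by
      intro x hx
      exact Set.mem_iUnion.2 ⟨0, by simpa using hx⟩
    have hVL : V ⊆ L := hVconn.subset_connectedComponentIn hv hVLhat
    have hLconn : IsPreconnected L := isPreconnected_connectedComponentIn
    have hFmL : IsPreconnected (F^[m] '' L) := hiter m L hLconn
    have hFmLsub : F^[m] '' L ⊆ Lhat := by
      rintro _ ⟨x, hx, rfl⟩
      have hx' : x ∈ Lhat := connectedComponentIn_subset Lhat v hx
      obtain ⟨n, y, hy, rfl⟩ := Set.mem_iUnion.1 hx'
      exact Set.mem_iUnion.2 ⟨m + n, y, hy, Function.iterate_add_apply F m n y⟩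
    obtain ⟨x, hx1, hx2⟩ := hrec
    have hxL : x ∈ L := hVL hx2
    have hxFmL : x ∈ F^[m] '' L := Set.image_mono hVL hx1
    have := hFmL.subset_connectedComponentIn hxFmL hFmLsub
    rwa [← connectedComponentIn_eq hxL] at this
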